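/- Let (X,d) and (Y,ρ) be semimetric spaces, f: X→Y a bijection that is a weak similarity with scaling function φ. If there exists a continuous, submultiplicative (φ*(uv) ≤ φ*(u)·φ*(v)), strictly increasing extension φ*: [0,∞)→[0,∞) of φ, then f is an η-quasisymmetric mapping with η = φ*. -/
import Mathlib


open Set Filter Topology

structure IsSemimetric {X : Type*} (d : X → X → ℝ) : Prop where
  nonneg : ∀ x y, 0 ≤ d x y
  eq_iff : ∀ x y, d x y = 0 ↔ x = y
  symm : ∀ x y, d x y = d y x

/-- `η` is a homeomorphism of `[0,∞)` onto itself (increasing, `η 0 = 0`). -/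
structure IsQSHomeo (η : ℝ → ℝ) : Prop where
  maps : ∀ t, 0 ≤ t → 0 ≤ η t
  zero : η 0 = 0
  strictMonoOn : StrictMonoOn η (Set.Ici 0)
  surjOn : ∀ s, 0 ≤ s → ∃ t, 0 ≤ t ∧ η t = s
  continuousOn : ContinuousOn η (Set.Ici 0)

/-- `f` is an `η`-quasisymmetric mapping between the semimetric spaces `(X,d)` and `(Y,ρ)`. -/
def IsQuasisymmetric {X Y : Type*} (d : X → X → ℝ) (ρ : Y → Y → ℝ)
    (η : ℝ → ℝ) (f : X → Y) : Prop :=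
  IsQSHomeo η ∧ ∀ (x a b : X) (t : ℝ), 0 < t →
    d x a ≤ t * d x b → ρ (f x) (f a) ≤ η t * ρ (f x) (f b)

structure IsTriangleFunction {X : Type*} (d : X → X → ℝ) (Φ : ℝ → ℝ → ℝ) : Prop where
  symm : ∀ u v, Φ u v = Φ v u
  mono : ∀ u u' v v', 0 ≤ u → u ≤ u' → 0 ≤ v → v ≤ v' → Φ u v ≤ Φ u' v'
  zero : Φ 0 0 = 0
  tri : ∀ x y z, d x y ≤ Φ (d x z) (d y z)

def IsPtolemaic {X : Type*} (d : X → X → ℝ) : Prop :=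
  ∀ x y z t : X, d x z * d t y ≤ d x y * d t z + d x t * d y z

def distSet {X : Type*} (d : X → X → ℝ) (A : Set X) : Set ℝ :=
  {r | ∃ x ∈ A, ∃ y ∈ A, r = d x y}

noncomputable def sdiam {X : Type*} (d : X → X → ℝ) (A : Set X) : ℝ :=
  sSup (distSet d A)

def spectrum' {X : Type*} (d : X → X → ℝ) : Set ℝ := {r | ∃ x y : X, r = d x y}

def IsWeakSimilarity {X Y : Type*} (d : X → X → ℝ) (ρ : Y → Y → ℝ)
    (f : X → Y) (φ : ℝ → ℝ) : Prop :=
  Function.Bijective f ∧ StrictMonoOn φ (spectrum' d) ∧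
    φ '' spectrum' d = spectrum' ρ ∧ ∀ x y, φ (d x y) = ρ (f x) (f y)

/-- The topology `τ_d` generated by a semimetric `d`. -/
def tauD {X : Type*} (d : X → X → ℝ) : TopologicalSpace X where
  IsOpen A := ∀ a ∈ A, ∃ r > 0, {x | d a x < r} ⊆ A
  isOpen_univ := fun _ _ => ⟨1, one_pos, fun _ _ => trivial⟩
  isOpen_inter := fun A B hA hB a ha => by
    obtain ⟨r1, hr1, h1⟩ := hA a ha.1
    obtain ⟨r2, hr2, h2⟩ := hB a ha.2
    refine ⟨min r1 r2, lt_min hr1 hr2, fun x hx => ⟨h1 ?_, h2 ?_⟩⟩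
    · have hx' : d a x < min r1 r2 := hx
      exact lt_of_lt_of_le hx' (min_le_left r1 r2)
    · have hx' : d a x < min r1 r2 := hx
      exact lt_of_lt_of_le hx' (min_le_right r1 r2)
  isOpen_sUnion := fun S hS a ha => by
    obtain ⟨A, hA, haA⟩ := ha
    obtain ⟨r, hr, h⟩ := hS A hA a haA
    exact ⟨r, hr, fun x hx => ⟨A, hA, h hx⟩⟩

theorem stmt_18 {X Y : Type*} (d : X → X → ℝ) (ρ : Y → Y → ℝ) (f : X → Y)
    (φ φstar : ℝ → ℝ)
    (hd : IsSemimetric d) (hρ : IsSemimetric ρ)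
    (hws : IsWeakSimilarity d ρ f φ)
    (hext : ∀ r ∈ spectrum' d, φstar r = φ r)
    (hhomeo : IsQSHomeo φstar)
    (hsub : ∀ u v : ℝ, 0 ≤ u → 0 ≤ v → φstar (u * v) ≤ φstar u * φstar v) :
    IsQuasisymmetric d ρ φstar f := by
  obtain ⟨hbij, hmono, himg, heq⟩ := hws
  refine ⟨hhomeo, fun x a b t ht hle => ?_⟩
  have hxa : d x a ∈ spectrum' d := ⟨x, a, rfl⟩
  have hxb : d x b ∈ spectrum' d := ⟨x, b, rfl⟩
  have h1 : ρ (f x) (f a) = φstar (d x a) := by rw [hext _ hxa, heq]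
  have h2 : ρ (f x) (f b) = φstar (d x b) := by rw [hext _ hxb, heq]
  rw [h1, h2]
  calc φstar (d x a) ≤ φstar (t * d x b) := by
        rcases eq_or_lt_of_le hle with h | h
        · rw [h]
        · exact le_of_lt (hhomeo.strictMonoOn (hd.nonneg x a)
            (mul_nonneg ht.le (hd.nonneg x b)) h)
    _ ≤ φstar t * φstar (d x b) := hsub t (d x b) ht.le (hd.nonneg x b)
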